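/- Let G be a finite simple graph on vertices {x_1,...,x_n} with cover ideal J = J(G) ⊆ R = k[x_1,...,x_n]. Then Ass(R/J^2) ⊆ Ass(R/J^3). -/

import Mathlib

open SimpleGraph MvPolynomial

/-! ### Auxiliary development for the proof -/


open Finset

section CombAux
variable {n : ℕ}

def acsCov (G : SimpleGraph (Fin n)) (C : Finset (Fin n)) : Prop :=
  ∀ ⦃i j⦄, G.Adj i j → i ∈ C ∨ j ∈ C

noncomputable def acsInd (C : Finset (Fin n)) : Fin n →₀ ℕ := ∑ i ∈ C, Finsupp.single i 1

lemma acsInd_apply (C : Finset (Fin n)) (v : Fin n) :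
    acsInd C v = if v ∈ C then 1 else 0 := by
  classical
  rw [acsInd, Finset.sum_apply']
  simp [Finsupp.single_apply]

lemma acsCov_univ (G : SimpleGraph (Fin n)) : acsCov G univ :=
  fun i _ _ => Or.inl (mem_univ i)

lemma acsCov_compl (G : SimpleGraph (Fin n)) {I : Finset (Fin n)}
    (h : ∀ u ∈ I, ∀ v ∈ I, ¬ G.Adj u v) : acsCov G Iᶜ := by
  intro i j hadj
  by_contra hc
  push_neg at hc
  obtain ⟨hi, hj⟩ := hc
  rw [Finset.mem_compl, not_not] at hi hj
  exact h i hi j hj hadj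

/-- column count bound from the domination inequality -/
lemma acs_col_bound {D : Fin 3 → Finset (Fin n)}
    {a : Fin n →₀ ℕ} {C : Finset (Fin n)}
    (hle : (∑ t, acsInd (D t)) ≤ a + acsInd C) (x : Fin n) :
    (univ.filter fun t => x ∈ D t).card ≤ a x + acsInd C x := by
  classical
  have h := Finsupp.le_def.mp hle x
  rw [Finsupp.finset_sum_apply] at h
  simp only [acsInd_apply] at h ⊢
  rw [Finset.card_filter]
  simpa [Finsupp.add_apply, acsInd_apply] using h

lemma acs_compl_count {D : Fin 3 → Finset (Fin n)} (x : Fin n) :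
    (univ.filter fun t => x ∈ (D t)ᶜ).card
      = 3 - (univ.filter fun t => x ∈ D t).card := by
  classical
  have h := Finset.card_filter_add_card_filter_not
    (s := (univ : Finset (Fin 3))) (p := fun t => x ∈ D t)
  simp only [Finset.card_univ, Fintype.card_fin] at h
  have heq : (univ.filter fun t => ¬ x ∈ D t) = (univ.filter fun t => x ∈ (D t)ᶜ) := by
    apply Finset.filter_congr
    intro t _
    simp [Finset.mem_compl]
  rw [← heq]; omega
  
end CombAux
section CycAux
open Finset

lemma acs_card_le_of_no_consec {k : ℕ} (F : Finset (ZMod (2 * k + 1)))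
    (h : ∀ x ∈ F, x + 1 ∉ F) : F.card ≤ k := by
  have hdisj : Disjoint F (F.image (· + 1)) := by
    rw [Finset.disjoint_right]
    intro x hx hxF
    obtain ⟨y, hy, rfl⟩ := Finset.mem_image.mp hx
    exact h y hy hxF
  have hinj : Function.Injective (fun x : ZMod (2 * k + 1) => x + 1) :=
    fun x y hxy => by simpa using hxy
  have hcard : (F ∪ F.image (· + 1)).card = 2 * F.card := by
    rw [Finset.card_union_of_disjoint hdisj, Finset.card_image_of_injective _ hinj]
    ring
  have hle : (F ∪ F.image (· + 1)).card ≤ Fintype.card (ZMod (2 * k + 1)) :=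
    Finset.card_le_univ _
  rw [hcard, ZMod.card] at hle
  omega

lemma acs_odd_filter_card (k : ℕ) :
    ((Finset.range (2 * k + 1)).filter (fun i => Odd i)).card = k := by
  induction k with
  | zero => decide
  | succ k ih =>
    have h1 : 2 * (k + 1) + 1 = (2 * k + 1) + 1 + 1 := by ring
    rw [h1, Finset.range_add_one, Finset.range_add_one, Finset.filter_insert, Finset.filter_insert]
    have hodd : Odd (2 * k + 1) := ⟨k, by ring⟩
    have heven : ¬ Odd (2 * k + 1 + 1) := by simp [Nat.odd_add_one, hodd]
    rw [if_neg heven, if_pos hodd, Finset.card_insert_of_notMem (by simp), ih]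

/-- Cast the no-two-cyclically-consecutive counting down to `Finset ℕ` on `range (2k+1)`. -/
lemma acs_card_le_of_no_consec_nat {k : ℕ} (F : Finset ℕ)
    (hF : F ⊆ Finset.range (2 * k + 1))
    (h : ∀ i ∈ F, (i + 1) % (2 * k + 1) ∉ F) : F.card ≤ k := by
  classical
  set l := 2 * k + 1 with hl
  have hinj : Set.InjOn (fun i : ℕ => (i : ZMod l)) (Finset.range l : Set ℕ) := by
    intro i hi j hj hij
    simp only [Finset.coe_range, Set.mem_Iio] at hi hj
    have : (i : ZMod l).val = (j : ZMod l).val := by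
      simp only at hij
      rw [hij]
    rwa [ZMod.val_natCast_of_lt hi, ZMod.val_natCast_of_lt hj] at this
  have hcard : (F.image (fun i : ℕ => (i : ZMod l))).card = F.card :=
    Finset.card_image_of_injOn (hinj.mono (by exact_mod_cast hF))
  rw [← hcard]
  apply acs_card_le_of_no_consec
  intro x hx hx1
  obtain ⟨i, hi, rfl⟩ := Finset.mem_image.mp hx
  obtain ⟨j, hj, hji⟩ := Finset.mem_image.mp hx1
  have hiR : i < l := Finset.mem_range.mp (hF hi)
  have hjR : j < l := Finset.mem_range.mp (hF hj)
  have hcast : ((j : ZMod l)) = (((i + 1) % l : ℕ) : ZMod l) := by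
    rw [ZMod.natCast_mod]
    push_cast
    exact hji
  have hmod : (i + 1) % l < l := Nat.mod_lt _ (by omega)
  have : j = (i + 1) % l := hinj (by simpa using hjR) (by simpa using hmod) hcast
  subst this
  exact h i hi hj

end CycAux

section WalkAux
variable {V : Type*} {G : SimpleGraph V}

/-- Extract a subwalk between positions `i ≤ j` of a walk. -/
lemma acs_exists_subwalk :
    ∀ {u v : V} (w : G.Walk u v) (i j : ℕ), i ≤ j → j ≤ w.length →
      ∃ p : G.Walk (w.getVert i) (w.getVert j), p.length = j - i := by
  intro u v w
  induction w with
  | nil =>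
    intro i j hij hj
    simp only [SimpleGraph.Walk.length_nil, Nat.le_zero] at hj
    subst hj
    interval_cases i
    exact ⟨SimpleGraph.Walk.nil, rfl⟩
  | @cons a b c h q ih =>
    intro i j hij hj
    match i, j with
    | 0, 0 => exact ⟨SimpleGraph.Walk.nil, rfl⟩
    | 0, (j + 1) =>
      rw [SimpleGraph.Walk.length_cons, Nat.add_le_add_iff_right] at hj
      obtain ⟨p, hp⟩ := ih 0 j (Nat.zero_le _) hj
      refine ⟨(((p.copy (SimpleGraph.Walk.getVert_zero q) rfl).cons h).copy
        (SimpleGraph.Walk.getVert_zero _).symm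
        (SimpleGraph.Walk.getVert_cons_succ _ _).symm), ?_⟩
      simp only [SimpleGraph.Walk.length_copy, SimpleGraph.Walk.length_cons, hp]; omega
    | (i + 1), (j + 1) =>
      rw [SimpleGraph.Walk.length_cons, Nat.add_le_add_iff_right] at hj
      obtain ⟨p, hp⟩ := ih i j (Nat.le_of_succ_le_succ hij) hj
      refine ⟨p.copy (SimpleGraph.Walk.getVert_cons_succ _ _).symm
        (SimpleGraph.Walk.getVert_cons_succ _ _).symm, ?_⟩
      simpa using hp

/-- If there is no odd closed walk, any two walks between the same endpoints
have the same parity. -/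
lemma acs_parity_eq (hno : ∀ (x : V) (w : G.Walk x x), ¬ Odd w.length)
    {x y : V} (w1 w2 : G.Walk x y) : (Odd w1.length ↔ Odd w2.length) := by
  by_contra hc
  apply hno y (w1.reverse.append w2)
  rw [SimpleGraph.Walk.length_append, SimpleGraph.Walk.length_reverse]
  rcases Nat.even_or_odd w1.length with h1 | h1
  · rcases Nat.even_or_odd w2.length with h2 | h2
    · exact absurd (iff_of_false (Nat.not_odd_iff_even.mpr h1)
        (Nat.not_odd_iff_even.mpr h2)) hc
    · exact h1.add_odd h2
  · rcases Nat.even_or_odd w2.length with h2 | h2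
    · exact h1.add_even h2
    · exact absurd (iff_of_true h1 h2) hc

/-- A graph with no odd closed walk admits a proper 2-coloring. -/
lemma acs_two_coloring (hno : ∀ (x : V) (w : G.Walk x x), ¬ Odd w.length) :
    ∃ c : V → Prop, ∀ ⦃u v⦄, G.Adj u v → (c u ↔ ¬ c v) := by
  classical
  refine ⟨fun x => ∃ w : G.Walk (G.connectedComponentMk x).out x, Odd w.length, ?_⟩
  intro u v hadj
  have hcomp : G.connectedComponentMk u = G.connectedComponentMk v :=
    SimpleGraph.ConnectedComponent.sound hadj.reachable
  have hreach : G.Reachable (G.connectedComponentMk u).out u :=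
    SimpleGraph.ConnectedComponent.exact (G.connectedComponentMk u).out_eq
  obtain ⟨wu⟩ := hreach
  have hout : (G.connectedComponentMk v).out = (G.connectedComponentMk u).out := by
    rw [hcomp]
  constructor
  · rintro ⟨w1, hw1⟩ ⟨w2, hw2⟩
    have hw2' : Odd (w2.copy hout rfl).length := by
      rw [SimpleGraph.Walk.length_copy]; exact hw2
    have weven : ¬ Odd (w1.concat hadj).length := by
      rw [SimpleGraph.Walk.length_concat, Nat.odd_add_one]
      exact not_not_intro hw1
    exact weven ((acs_parity_eq hno (w1.concat hadj) (w2.copy hout rfl)).mpr hw2')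
  · intro hnv
    by_contra hnu
    have hwueven : ¬ Odd wu.length := fun hodd => hnu ⟨wu, hodd⟩
    have hodd : Odd (wu.concat hadj).length := by
      rw [SimpleGraph.Walk.length_concat, Nat.odd_add_one]
      exact hwueven
    apply hnv
    refine ⟨(wu.concat hadj).copy hout.symm rfl, ?_⟩
    rw [SimpleGraph.Walk.length_copy]
    exact hodd

end WalkAux
section MCL
open Finset

variable {n : ℕ}

/-- auxiliary graph on the vertices where `a = 1` -/
def acsO (G : SimpleGraph (Fin n)) (a : Fin n →₀ ℕ) : SimpleGraph (Fin n) where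
  Adj u v := G.Adj u v ∧ a u = 1 ∧ a v = 1
  symm := ⟨fun u v ⟨h, h1, h2⟩ => ⟨h.symm, h2, h1⟩⟩
  loopless := ⟨fun v h => G.loopless.irrefl v h.1⟩

lemma acs_exists_not_mem_fin3 {s : Finset (Fin 3)} (h : s.card < 3) : ∃ t, t ∉ s := by
  by_contra hc
  push_neg at hc
  have : (univ : Finset (Fin 3)) ⊆ s := fun t _ => hc t
  have := Finset.card_le_card this
  simp at this
  omega

lemma acsMCL (G : SimpleGraph (Fin n)) (a : Fin n →₀ ℕ)
    (H : ∀ C : Finset (Fin n), acsCov G C → ∃ D : Fin 3 → Finset (Fin n),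
      (∀ t, acsCov G (D t)) ∧ (∑ t, acsInd (D t)) ≤ a + acsInd C) :
    ∃ D1 D2, acsCov G D1 ∧ acsCov G D2 ∧ acsInd D1 + acsInd D2 ≤ a := by
  classical
  -- Step 1: no edge with both endpoints of value 0
  have hZZ : ∀ u v, G.Adj u v → a u = 0 → a v = 0 → False := by
    intro u v hadj hu hv
    obtain ⟨D, hcov, hle⟩ := H univ (acsCov_univ G)
    have hu' := acs_col_bound hle u
    have hv' := acs_col_bound hle v
    rw [hu, acsInd_apply, if_pos (mem_univ u)] at hu'
    rw [hv, acsInd_apply, if_pos (mem_univ v)] at hv'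
    have hcard : ((univ.filter fun t => u ∈ D t) ∪ (univ.filter fun t => v ∈ D t)).card < 3 := by
      calc _ ≤ _ := Finset.card_union_le _ _
        _ < 3 := by omega
    obtain ⟨t, ht⟩ := acs_exists_not_mem_fin3 hcard
    rw [Finset.mem_union, not_or] at ht
    obtain ⟨ht1, ht2⟩ := ht
    rw [Finset.mem_filter, not_and] at ht1 ht2
    rcases hcov t hadj with h | h
    · exact ht1 (mem_univ t) h
    · exact ht2 (mem_univ t) h
  -- Step 2: no edge from a 0-vertex to a 1-vertex
  have hZO : ∀ u v, G.Adj u v → a u = 0 → a v = 1 → False := by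
    intro u v hadj hu hv
    have hsing : ∀ x ∈ ({u} : Finset (Fin n)), ∀ y ∈ ({u} : Finset (Fin n)), ¬ G.Adj x y := by
      intro x hx y hy
      rw [Finset.mem_singleton] at hx hy
      subst hx; subst hy
      exact G.irrefl
    obtain ⟨D, hcov, hle⟩ := H ({u} : Finset (Fin n))ᶜ (acsCov_compl G hsing)
    have hu' := acs_col_bound hle u
    have hv' := acs_col_bound hle v
    have hucompl : u ∉ ({u} : Finset (Fin n))ᶜ := by simp
    have hvcompl : v ∈ ({u} : Finset (Fin n))ᶜ := by simp [hadj.ne']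
    rw [hu, acsInd_apply, if_neg hucompl] at hu'
    rw [hv, acsInd_apply, if_pos hvcompl] at hv'
    have hvcard : ((univ.filter fun t => v ∈ D t)).card < 3 := by omega
    obtain ⟨t, ht⟩ := acs_exists_not_mem_fin3 hvcard
    rw [Finset.mem_filter, not_and] at ht
    have hunotin : u ∉ D t := by
      intro hmem
      have : t ∈ univ.filter fun t => u ∈ D t := Finset.mem_filter.mpr ⟨mem_univ t, hmem⟩
      have hcard := Finset.card_pos.mpr ⟨t, this⟩
      omega
    rcases hcov t hadj with h | h
    · exact hunotin h
    · exact ht (mem_univ t) h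
  by_cases hcol : ∃ c : Fin n → Prop, ∀ ⦃x y⦄, (acsO G a).Adj x y → (c x ↔ ¬ c y)
  · -- 2-colorable case : build the two covers
    obtain ⟨c, hc⟩ := hcol
    refine ⟨(univ.filter fun x => a x = 0 ∨ (a x = 1 ∧ c x))ᶜ,
            (univ.filter fun x => a x = 0 ∨ (a x = 1 ∧ ¬ c x))ᶜ, ?_, ?_, ?_⟩
    · apply acsCov_compl
      intro x hx y hy hadj
      rw [Finset.mem_filter] at hx hy
      rcases hx.2 with hx0 | ⟨hx1, hxc⟩
      · rcases hy.2 with hy0 | ⟨hy1, _⟩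
        · exact hZZ x y hadj hx0 hy0
        · exact hZO x y hadj hx0 hy1
      · rcases hy.2 with hy0 | ⟨hy1, hyc⟩
        · exact hZO y x hadj.symm hy0 hx1
        · exact ((hc ⟨hadj, hx1, hy1⟩).mp hxc) hyc
    · apply acsCov_compl
      intro x hx y hy hadj
      rw [Finset.mem_filter] at hx hy
      rcases hx.2 with hx0 | ⟨hx1, hxc⟩
      · rcases hy.2 with hy0 | ⟨hy1, _⟩
        · exact hZZ x y hadj hx0 hy0
        · exact hZO x y hadj hx0 hy1
      · rcases hy.2 with hy0 | ⟨hy1, hyc⟩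
        · exact hZO y x hadj.symm hy0 hx1
        · exact hxc (((hc ⟨hadj, hx1, hy1⟩).mpr) hyc)
    · rw [Finsupp.le_def]
      intro x
      rw [Finsupp.add_apply, acsInd_apply, acsInd_apply]
      by_cases h0 : a x = 0
      · rw [if_neg, if_neg]
        · omega
        · simp [h0]
        · simp [h0]
      · by_cases h1 : a x = 1
        · by_cases hcx : c x
          · rw [if_neg (by simp [h1, hcx]), if_pos (by simp [h0, h1, hcx])]
            omega
          · rw [if_pos (by simp [h0, h1, hcx]), if_neg (by simp [h1, hcx])]
            omega
        · have : 2 ≤ a x := by omega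
          split_ifs <;> omega
  · -- non-2-colorable case: find minimal odd closed walk and contradict
    exfalso
    have hwalk : ¬ (∀ (x : Fin n) (w : (acsO G a).Walk x x), ¬ Odd w.length) :=
      fun hno => hcol (acs_two_coloring hno)
    push_neg at hwalk
    obtain ⟨x0, w0, hw0⟩ := hwalk
    set setL := {m : ℕ | Odd m ∧ ∃ x : Fin n, ∃ w : (acsO G a).Walk x x, w.length = m}
      with hsetL
    have hne : setL.Nonempty := ⟨w0.length, hw0, x0, w0, rfl⟩
    obtain ⟨hlodd, v, w, hwl⟩ := Nat.sInf_mem hne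
    set l := sInf setL with hldef
    obtain ⟨k, hk⟩ := hlodd
    -- all walk vertices have value 1
    have hO : ∀ i, i < l → a (w.getVert i) = 1 := by
      intro i hi
      have hadj := w.adj_getVert_succ (by rw [hwl]; exact hi : i < w.length)
      exact hadj.2.1
    set Zfin := univ.filter (fun x => a x = 0) with hZfin
    set S := ((range l).filter (fun i => Odd i)).image w.getVert with hS
    have hSO : ∀ x ∈ S, a x = 1 := by
      intro x hx
      obtain ⟨i, hi, rfl⟩ := Finset.mem_image.mp hx
      rw [Finset.mem_filter, Finset.mem_range] at hi
      exact hO i hi.1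
    -- no "chord" between two odd positions
    have hchord : ∀ i j, i < j → j < l → Odd i → Odd j →
        ¬ (acsO G a).Adj (w.getVert j) (w.getVert i) := by
      intro i j hij hjl hiodd hjodd hadj
      obtain ⟨p, hp⟩ := acs_exists_subwalk w i j (le_of_lt hij) (by rw [hwl]; omega)
      have hlen : (p.concat hadj).length = j - i + 1 := by
        rw [SimpleGraph.Walk.length_concat, hp]
      have hoddlen : Odd (p.concat hadj).length := by
        rw [hlen]
        exact (Nat.Odd.sub_odd hjodd hiodd).add_one
      have hmem : (p.concat hadj).length ∈ setL :=
        ⟨hoddlen, _, p.concat hadj, rfl⟩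
      have := Nat.sInf_le hmem
      rw [hlen] at this
      have hi1 : 1 ≤ i := hiodd.pos
      omega
    -- Z ∪ S is independent
    have hIndep : ∀ x ∈ Zfin ∪ S, ∀ y ∈ Zfin ∪ S, ¬ G.Adj x y := by
      intro x hx y hy hadj
      rcases Finset.mem_union.mp hx with hx' | hx' <;>
        rcases Finset.mem_union.mp hy with hy' | hy'
      · exact hZZ x y hadj (Finset.mem_filter.mp hx').2 (Finset.mem_filter.mp hy').2
      · exact hZO x y hadj (Finset.mem_filter.mp hx').2 (hSO y hy')
      · exact hZO y x hadj.symm (Finset.mem_filter.mp hy').2 (hSO x hx')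
      · obtain ⟨i, hi, rfl⟩ := Finset.mem_image.mp hx'
        obtain ⟨j, hj, hj2⟩ := Finset.mem_image.mp hy'
        rw [Finset.mem_filter, Finset.mem_range] at hi hj
        subst hj2
        rcases lt_trichotomy i j with h | h | h
        · exact hchord i j h hj.1 hi.2 hj.2 ⟨hadj.symm, hO j hj.1, hO i hi.1⟩
        · subst h
          exact G.irrefl hadj
        · exact hchord j i h hi.1 hj.2 hi.2 ⟨hadj, hO i hi.1, hO j hj.1⟩
    obtain ⟨D, hcovD, hle⟩ := H (Zfin ∪ S)ᶜ (acsCov_compl G hIndep)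
    -- rows : each complement (D t)ᶜ meets walk positions in at most k indices
    have hrow : ∀ t, ((range l).filter
        (fun i => w.getVert i ∈ (D t)ᶜ)).card ≤ k := by
      intro t
      have hsub : ((range l).filter (fun i => w.getVert i ∈ (D t)ᶜ)) ⊆ range (2 * k + 1) := by
        rw [← hk]; exact Finset.filter_subset _ _
      apply acs_card_le_of_no_consec_nat _ hsub
      intro i hi hi1
      rw [Finset.mem_filter, Finset.mem_range] at hi hi1
      rw [← hk] at hi1
      -- adjacency between consecutive walk positions (cyclically)
      have hadj : G.Adj (w.getVert i) (w.getVert ((i + 1) % l)) := by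
        by_cases hil : i + 1 < l
        · rw [Nat.mod_eq_of_lt hil]
          exact (w.adj_getVert_succ (by rw [hwl]; omega)).1
        · have hieq : i + 1 = l := by omega
          have h0 : (i + 1) % l = 0 := by rw [hieq]; exact Nat.mod_self l
          rw [h0, SimpleGraph.Walk.getVert_zero]
          have hlast := (w.adj_getVert_succ (by rw [hwl]; omega : i < w.length)).1
          have : w.getVert (i + 1) = v := by
            rw [hieq, ← hwl]
            exact w.getVert_length
          rwa [this] at hlast
      rcases hcovD t hadj with h | h
      · exact (Finset.mem_compl.mp hi.2) h
      · exact (Finset.mem_compl.mp hi1.2) h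
    -- columns : each walk position is covered enough times
    have hcolbound : ∀ i, i < l →
        1 + (if Odd i then 1 else 0) ≤ (univ.filter fun t => w.getVert i ∈ (D t)ᶜ).card := by
      intro i hi
      have hd := acs_col_bound hle (w.getVert i)
      rw [hO i hi, acsInd_apply] at hd
      rw [acs_compl_count]
      by_cases hodd : Odd i
      · have hinS : w.getVert i ∈ S := Finset.mem_image.mpr
          ⟨i, Finset.mem_filter.mpr ⟨Finset.mem_range.mpr hi, hodd⟩, rfl⟩
        have hnotC : w.getVert i ∉ (Zfin ∪ S)ᶜ := by
          rw [Finset.mem_compl, not_not]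
          exact Finset.mem_union_right _ hinS
        rw [if_neg hnotC] at hd
        rw [if_pos hodd]
        omega
      · rw [if_neg hodd]
        split_ifs at hd <;> omega
    -- double counting
    have hlower : l + k ≤ ∑ i ∈ range l,
        (univ.filter fun t => w.getVert i ∈ (D t)ᶜ).card := by
      calc l + k = ∑ i ∈ range l, (1 + (if Odd i then 1 else 0)) := by
            rw [Finset.sum_add_distrib, Finset.sum_const, Finset.card_range,
              smul_eq_mul, mul_one, ← Finset.card_filter, hk, acs_odd_filter_card k]
        _ ≤ _ := Finset.sum_le_sum (fun i hi => hcolbound i (Finset.mem_range.mp hi))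
    have hupper : (∑ i ∈ range l,
        (univ.filter fun t => w.getVert i ∈ (D t)ᶜ).card) ≤ 3 * k := by
      have hswap : (∑ i ∈ range l, (univ.filter fun t => w.getVert i ∈ (D t)ᶜ).card)
          = ∑ t : Fin 3, ((range l).filter (fun i => w.getVert i ∈ (D t)ᶜ)).card := by
        simp only [Finset.card_filter]
        exact Finset.sum_comm
      rw [hswap]
      calc ∑ t : Fin 3, ((range l).filter (fun i => w.getVert i ∈ (D t)ᶜ)).card
          ≤ ∑ _t : Fin 3, k := Finset.sum_le_sum (fun t _ => hrow t)
        _ = 3 * k := by simp [Finset.sum_const, Finset.card_univ]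
    omega

end MCL
noncomputable def coverIdeal' (K : Type*) [Field K] {n : ℕ} (G : SimpleGraph (Fin n)) :
    Ideal (MvPolynomial (Fin n) K) :=
  ⨅ (i : Fin n) (j : Fin n) (_ : G.Adj i j),
    Ideal.span {MvPolynomial.X i, MvPolynomial.X j}

section Algebra
open MvPolynomial Pointwise

variable {K : Type*} [Field K] {n : ℕ} (G : SimpleGraph (Fin n))

lemma acs_mon_cov_mem {C : Finset (Fin n)} (h : acsCov G C) :
    monomial (acsInd C) (1 : K) ∈ coverIdeal' K G := by
  rw [coverIdeal']
  simp only [Submodule.mem_iInf]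
  intro i j hadj
  have key : ∀ t : Fin n, t ∈ C → monomial (acsInd C) (1 : K) ∈
      (Ideal.span {X i, X j} : Ideal (MvPolynomial (Fin n) K)) ∨ t ∉ ({i, j} : Set (Fin n)) := by
    intro t ht
    by_cases htij : t ∈ ({i, j} : Set (Fin n))
    · left
      have hle : Finsupp.single t 1 ≤ acsInd C := by
        rw [Finsupp.single_le_iff, acsInd_apply, if_pos ht]
      have heq : monomial (acsInd C) (1 : K)
          = monomial (acsInd C - Finsupp.single t 1) (1 : K) * X t := by
        rw [X, monomial_mul, mul_one, tsub_add_cancel_of_le hle]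
      rw [heq]
      apply Ideal.mul_mem_left
      apply Ideal.subset_span
      rcases htij with rfl | htj
      · exact Set.mem_insert _ _
      · rw [Set.mem_singleton_iff] at htj
        subst htj
        exact Set.mem_insert_of_mem _ rfl
    · right; exact htij
  rcases h hadj with hm | hm
  · rcases key i hm with h' | h'
    · exact h'
    · exact absurd (Set.mem_insert i _) h'
  · rcases key j hm with h' | h'
    · exact h'
    · exact absurd (Set.mem_insert_of_mem _ rfl) h'

/-- exponents dominating a cover -/
def acsCovSet : Set (Fin n →₀ ℕ) := {d | ∃ C, acsCov G C ∧ acsInd C = d}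

lemma acs_J_le_span :
    coverIdeal' K G ≤ Ideal.span ((fun d => monomial d (1 : K)) '' acsCovSet G) := by
  intro p hp
  rw [mem_ideal_span_monomial_image]
  intro m hm
  refine ⟨acsInd m.support, ⟨m.support, ?_, rfl⟩, ?_⟩
  · intro i j hadj
    have hp' : p ∈ (Ideal.span {X i, X j} : Ideal (MvPolynomial (Fin n) K)) := by
      rw [coverIdeal'] at hp
      simp only [Submodule.mem_iInf] at hp
      exact hp i j hadj
    have himg : ({X i, X j} : Set (MvPolynomial (Fin n) K)) = X '' {i, j} := by
      rw [Set.image_pair]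
    rw [himg, mem_ideal_span_X_image] at hp'
    obtain ⟨t, ht, htm⟩ := hp' m hm
    rcases ht with rfl | rfl
    · exact Or.inl (Finsupp.mem_support_iff.mpr htm)
    · exact Or.inr (Finsupp.mem_support_iff.mpr (by simpa using htm))
  · intro v
    rw [acsInd_apply]
    split_ifs with hv
    · exact Nat.one_le_iff_ne_zero.mpr (Finsupp.mem_support_iff.mp hv)
    · exact Nat.zero_le _

lemma acs_mono_image_mul (A B : Set (Fin n →₀ ℕ)) :
    (((fun d => monomial d (1 : K)) '' A) * ((fun d => monomial d (1 : K)) '' B) : Set _)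
      = (fun d => monomial d (1 : K)) '' (A + B) := by
  ext z
  constructor
  · rintro ⟨x, ⟨a, ha, rfl⟩, y, ⟨b, hb, rfl⟩, rfl⟩
    exact ⟨a + b, ⟨a, ha, b, hb, rfl⟩, by simp [monomial_mul]⟩
  · rintro ⟨d, ⟨a, ha, b, hb, rfl⟩, rfl⟩
    exact ⟨monomial a 1, ⟨a, ha, rfl⟩, monomial b 1, ⟨b, hb, rfl⟩,
      by simp [monomial_mul]⟩

lemma acs_J3_extract {p : MvPolynomial (Fin n) K} (hp : p ∈ (coverIdeal' K G) ^ 3) :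
    ∀ m ∈ p.support, ∃ C1 C2 C3 : Finset (Fin n), acsCov G C1 ∧ acsCov G C2 ∧ acsCov G C3 ∧
      acsInd C1 + acsInd C2 + acsInd C3 ≤ m := by
  intro m hm
  have hle : (coverIdeal' K G) ^ 3 ≤
      Ideal.span ((fun d => monomial d (1 : K)) '' (acsCovSet G + acsCovSet G + acsCovSet G)) := by
    have h1 := acs_J_le_span (K := K) G
    calc (coverIdeal' K G) ^ 3
        ≤ (Ideal.span ((fun d => monomial d (1 : K)) '' acsCovSet G)) ^ 3 := by
          exact Ideal.pow_right_mono h1 3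
      _ = Ideal.span ((fun d => monomial d (1 : K)) '' (acsCovSet G + acsCovSet G + acsCovSet G)) := by
          rw [pow_succ, pow_two, Ideal.span_mul_span', acs_mono_image_mul,
            Ideal.span_mul_span', acs_mono_image_mul]
  have hp' := hle hp
  rw [mem_ideal_span_monomial_image] at hp'
  obtain ⟨d, hd, hdm⟩ := hp' m hm
  obtain ⟨e, ⟨d1, hd1, d2, hd2, rfl⟩, d3, hd3, rfl⟩ := hd
  obtain ⟨C1, hC1, rfl⟩ := hd1
  obtain ⟨C2, hC2, rfl⟩ := hd2
  obtain ⟨C3, hC3, rfl⟩ := hd3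
  exact ⟨C1, C2, C3, hC1, hC2, hC3, hdm⟩

/-- The key colon computation : `J³ : J = J²`. -/
lemma acs_colon (r : MvPolynomial (Fin n) K)
    (hr : ∀ C : Finset (Fin n), acsCov G C →
      r * monomial (acsInd C) (1 : K) ∈ (coverIdeal' K G) ^ 3) :
    r ∈ (coverIdeal' K G) ^ 2 := by
  classical
  rw [r.as_sum]
  apply Ideal.sum_mem
  intro m hm
  -- apply the combinatorial lemma to the exponent m
  have hMCL := acsMCL G m ?_
  · obtain ⟨D1, D2, hD1, hD2, hle⟩ := hMCL
    have heq : monomial m (r.coeff m)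
        = monomial (acsInd D1) (1 : K) * (monomial (acsInd D2) (1 : K)
            * monomial (m - acsInd D1 - acsInd D2) (r.coeff m)) := by
      rw [monomial_mul, monomial_mul, one_mul, one_mul, tsub_tsub, ← add_assoc,
        add_tsub_cancel_of_le hle]
    rw [heq, pow_two]
    exact Ideal.mul_mem_mul (acs_mon_cov_mem G hD1)
      (Ideal.mul_mem_right _ _ (acs_mon_cov_mem G hD2))
  · intro C hC
    have hmem : m + acsInd C ∈ (r * monomial (acsInd C) (1 : K)).support := by
      rw [MvPolynomial.mem_support_iff, coeff_mul_monomial, mul_one]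
      exact MvPolynomial.mem_support_iff.mp hm
    obtain ⟨C1, C2, C3, h1, h2, h3, hsum⟩ := acs_J3_extract G (hr C hC) _ hmem
    refine ⟨![C1, C2, C3], ?_, ?_⟩
    · intro t
      fin_cases t <;> simpa using ‹_›
    · rw [Fin.sum_univ_three]
      simpa using hsum

end Algebra

section AssocAux
variable {R : Type*} [CommRing R] {M N : Type*} [AddCommGroup M] [Module R M]
  [AddCommGroup N] [Module R N]

lemma acs_smul_pair_eq_zero {r : R} {a : M} {b : N} :
    r • ((a, b) : M × N) = 0 ↔ r • a = 0 ∧ r • b = 0 := by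
  rw [Prod.smul_mk, Prod.mk_eq_zero]

lemma acs_isAssociatedPrime_prod {P : Ideal R} (h : IsAssociatedPrime P (M × N)) :
    IsAssociatedPrime P M ∨ IsAssociatedPrime P N := by
  have h' : P ∈ associatedPrimes R (M × N) := h
  rw [associatedPrimes.prod] at h'
  exact h'

lemma acs_associatedPrimes_pi_fin (M : Type*) [AddCommGroup M] [Module R M] :
    ∀ m : ℕ, associatedPrimes R (Fin m → M) ⊆ associatedPrimes R M := by
  intro m
  induction m with
  | zero =>
    intro P hP
    exact absurd hP (by
      haveI : Subsingleton (Fin 0 → M) := ⟨fun f g => funext fun i => i.elim0⟩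
      exact not_isAssociatedPrime_of_subsingleton)
  | succ m ih =>
    intro P hP
    have e : (Fin (m + 1) → M) ≃ₗ[R] M × (Fin m → M) :=
      { toFun := fun f => (f 0, fun i => f i.succ)
        invFun := fun p => Fin.cons p.1 p.2
        left_inv := fun f => by
          funext i
          exact Fin.cases rfl (fun j => rfl) i
        right_inv := fun p => rfl
        map_add' := fun f g => rfl
        map_smul' := fun c f => rfl }
    have hP' : IsAssociatedPrime P (M × (Fin m → M)) :=
      hP.map_of_injective e.toLinearMap e.injective
    rcases acs_isAssociatedPrime_prod hP' with h | h
    · exact h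
    · exact ih h

lemma acs_associatedPrimes_pi {ι : Type*} [Fintype ι] (M : Type*) [AddCommGroup M]
    [Module R M] :
    associatedPrimes R (ι → M) ⊆ associatedPrimes R M := by
  intro P hP
  have e : (ι → M) ≃ₗ[R] (Fin (Fintype.card ι) → M) :=
    LinearEquiv.funCongrLeft R M (Fintype.equivFin ι).symm
  exact acs_associatedPrimes_pi_fin M (Fintype.card ι)
    (hP.map_of_injective e.toLinearMap e.injective)

end AssocAux
section Final
open MvPolynomial

theorem ass_sq_subset_ass_cube' {k : Type} [Field k] {n : ℕ}
    (G : SimpleGraph (Fin n)) :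
    associatedPrimes (MvPolynomial (Fin n) k)
        (MvPolynomial (Fin n) k ⧸ (coverIdeal' k G) ^ 2) ⊆
      associatedPrimes (MvPolynomial (Fin n) k)
        (MvPolynomial (Fin n) k ⧸ (coverIdeal' k G) ^ 3) := by
  classical
  let Φ : MvPolynomial (Fin n) k →ₗ[MvPolynomial (Fin n) k]
      ({C : Finset (Fin n) // acsCov G C} →
        (MvPolynomial (Fin n) k ⧸ (coverIdeal' k G) ^ 3)) :=
    LinearMap.pi (fun C => ((coverIdeal' k G) ^ 3).mkQ ∘ₗ
      (LinearMap.mulLeft (MvPolynomial (Fin n) k) (monomial (acsInd C.1) (1 : k))))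
  have hker : ((coverIdeal' k G) ^ 2 : Ideal (MvPolynomial (Fin n) k))
      ≤ LinearMap.ker Φ := by
    intro r hr
    rw [LinearMap.mem_ker]
    funext C
    have hmem : monomial (acsInd C.1) (1 : k) * r ∈ (coverIdeal' k G) ^ 3 := by
      have h3 : coverIdeal' k G * (coverIdeal' k G) ^ 2 = (coverIdeal' k G) ^ 3 := by
        rw [pow_succ]
        exact mul_comm _ _
      rw [← h3]
      exact Ideal.mul_mem_mul (acs_mon_cov_mem G C.2) hr
    show ((coverIdeal' k G) ^ 3).mkQ (monomial (acsInd C.1) (1 : k) * r) = 0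
    rw [Submodule.mkQ_apply, Submodule.Quotient.mk_eq_zero]
    exact hmem
  have hinj : Function.Injective (Submodule.liftQ _ Φ hker) := by
    rw [← LinearMap.ker_eq_bot, Submodule.ker_liftQ_eq_bot]
    intro r hrk
    rw [LinearMap.mem_ker] at hrk
    apply acs_colon G r
    intro C hC
    have hC' := congrFun hrk ⟨C, hC⟩
    have hC'' : ((coverIdeal' k G) ^ 3).mkQ (monomial (acsInd C) (1 : k) * r) = 0 := hC'
    rw [Submodule.mkQ_apply, Submodule.Quotient.mk_eq_zero] at hC''
    rwa [mul_comm] at hC''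
  intro P hP
  exact acs_associatedPrimes_pi _
    (associatedPrimes.subset_of_injective hinj hP)

end Final


/-- The chromatic number of a graph, as a natural number: the least `m` such
that `G` has a proper `m`-coloring. -/
noncomputable def chromNum {V : Type*} (G : SimpleGraph V) : ℕ :=
  sInf {m | G.Colorable m}

/-- `G` is critically `s`-chromatic: `χ(G) = s` and deleting any vertex drops
the chromatic number to `s - 1`. -/
def CriticallyChromatic {V : Type*} (G : SimpleGraph V) (s : ℕ) : Prop :=
  chromNum G = s ∧ ∀ v : V, chromNum (G.induce {v}ᶜ) = s - 1

/-- The expansion `G[W]` of a graph `G` at a set of vertices `W`: each vertex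
`w ∈ W` is replaced by two adjacent copies (`Sum.inl w` and `Sum.inr w`), each
adjacent to (both copies of) the neighbors of `w`. -/
def expansion {V : Type*} (G : SimpleGraph V) (W : Set V) : SimpleGraph (V ⊕ W) :=
  SimpleGraph.fromRel (fun a b =>
    match a, b with
    | Sum.inl u, Sum.inl v => G.Adj u v
    | Sum.inl u, Sum.inr w => G.Adj u (w : V) ∨ u = (w : V)
    | Sum.inr _, Sum.inl _ => False
    | Sum.inr w, Sum.inr w' => G.Adj (w : V) (w' : V))

/-- The `s`-th expansion `G^s` of `G`: every vertex is replaced by a clique of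
size `s` (its shadows), and shadows of adjacent vertices are adjacent. -/
def nExpansion {V : Type*} (G : SimpleGraph V) (s : ℕ) : SimpleGraph (V × Fin s) :=
  SimpleGraph.fromRel (fun a b => G.Adj a.1 b.1 ∨ a.1 = b.1)

/-- `W` is an independent set of `G`. -/
def IsIndepSet {V : Type*} (G : SimpleGraph V) (W : Set V) : Prop :=
  ∀ ⦃u v⦄, u ∈ W → v ∈ W → ¬ G.Adj u v

/-- `W` is a maximal independent set of `G`. -/
def IsMaxIndepSet {V : Type*} (G : SimpleGraph V) (W : Set V) : Prop :=
  _root_.IsIndepSet G W ∧ ∀ W', _root_.IsIndepSet G W' → W ⊆ W' → W = W'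

/-- `W` is a vertex cover of `G`. -/
def IsVertexCover {V : Type*} (G : SimpleGraph V) (W : Set V) : Prop :=
  ∀ ⦃u v⦄, G.Adj u v → u ∈ W ∨ v ∈ W

/-- `W` is a minimal vertex cover of `G`. -/
def IsMinVertexCover {V : Type*} (G : SimpleGraph V) (W : Set V) : Prop :=
  _root_.IsVertexCover G W ∧ ∀ W' ⊆ W, _root_.IsVertexCover G W' → W' = W

/-- `G` has a `b`-fold coloring using (at most) `d` colors: each vertex gets a
set of `b` colors, adjacent vertices getting disjoint sets. -/
def FoldColorable {V : Type*} (G : SimpleGraph V) (b d : ℕ) : Prop :=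
  ∃ f : V → Finset (Fin d), (∀ v, (f v).card = b) ∧
    ∀ ⦃u v⦄, G.Adj u v → Disjoint (f u) (f v)

/-- The `b`-fold chromatic number `χ_b(G)`. -/
noncomputable def foldChromNum {V : Type*} (G : SimpleGraph V) (b : ℕ) : ℕ :=
  sInf {d | FoldColorable G b d}

/-- The fractional chromatic number `χ_f(G) = inf_b χ_b(G)/b`. -/
noncomputable def fracChromNum {V : Type*} (G : SimpleGraph V) : ℝ :=
  ⨅ b : ℕ+, (foldChromNum G b : ℝ) / (b : ℝ)

/-- The cover ideal `J(G) = ⋂_{{i,j} ∈ E(G)} (x_i, x_j)` of a graph `G` on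
`{x_1, …, x_n}`, inside `k[x_1, …, x_n]`. -/
noncomputable def coverIdeal (k : Type*) [Field k] {n : ℕ} (G : SimpleGraph (Fin n)) :
    Ideal (MvPolynomial (Fin n) k) :=
  ⨅ (i : Fin n) (j : Fin n) (_ : G.Adj i j),
    Ideal.span {MvPolynomial.X i, MvPolynomial.X j}

/-- For any finite simple graph `G` with cover ideal `J`,
`Ass(R/J²) ⊆ Ass(R/J³)`. -/
theorem ass_sq_subset_ass_cube {k : Type} [Field k] {n : ℕ}
    (G : SimpleGraph (Fin n)) :
    associatedPrimes (MvPolynomial (Fin n) k)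
        (MvPolynomial (Fin n) k ⧸ (coverIdeal k G) ^ 2) ⊆
      associatedPrimes (MvPolynomial (Fin n) k)
        (MvPolynomial (Fin n) k ⧸ (coverIdeal k G) ^ 3) := by
  exact ass_sq_subset_ass_cube' G
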